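/- Let e and q be coprime integers with 2 ≤ e < q, and let W(T) ∈ ℤ⟦T⟧ be the formal power series whose n-th coefficient is 1 if n is a Weierstrass gap for (e,q) and 0 otherwise. Then in ℤ⟦T⟧ one has the identity (1 − T)·(1 − T^e)·(1 − T^q)·W(T) = (1 − T^e)·(1 − T^q) − (1 − T)·(1 − T^{e·q}); equivalently, W(T) = 1/(1−T) − (1 − T^{e·q})/((1 − T^e)(1 − T^q)). -/

import Mathlib

open PowerSeries

private lemma auxU : (1 - X) * PowerSeries.mk (fun _ => (1 : ℤ)) = 1 := by
  ext n
  rw [sub_mul, one_mul, map_sub]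
  cases n with
  | zero => simp
  | succ n => simp [coeff_succ_X_mul, coeff_one]

private lemma auxRep (e q : ℕ) (hq : 0 < q) (n : ℕ) (h : ∃ m k : ℕ, n = m * e + k * q) :
    ∃ m k : ℕ, m < q ∧ n = m * e + k * q := by
  obtain ⟨m, k, rfl⟩ := h
  refine ⟨m % q, k + (m / q) * e, Nat.mod_lt _ hq, ?_⟩
  have : m = m % q + (m / q) * q := by
    rw [Nat.mod_add_div']
  calc m * e + k * q = (m % q + (m / q) * q) * e + k * q := by rw [← this]
    _ = m % q * e + (k + m / q * e) * q := by ring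

private lemma auxNoRep (e q : ℕ) (he : 2 ≤ e) (hcop : Nat.Coprime e q)
    (i m k : ℕ) (hi : i < q) (h : e * i = m * e + (k + 1) * q) : False := by
  have he0 : 0 < e := by omega
  have h' : i * e = m * e + (k + 1) * q := by rw [mul_comm]; exact h
  have hmi : m ≤ i := by
    by_contra hc
    push_neg at hc
    have : i * e < m * e := (Nat.mul_lt_mul_right he0).mpr hc
    have hpos : 0 < (k + 1) * q := Nat.mul_pos (Nat.succ_pos k) (by omega)
    omega
  have hsub : (i - m) * e = (k + 1) * q := by
    rw [Nat.sub_mul]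
    omega
  have hdvd : q ∣ (i - m) * e := ⟨k + 1, by rw [hsub]; ring⟩
  have hdvd2 : q ∣ (i - m) := (Nat.Coprime.dvd_of_dvd_mul_right (by
    exact hcop.symm) hdvd)
  have hpos : 0 < i - m := by
    rcases Nat.eq_zero_or_pos (i - m) with h0 | h0
    · rw [h0, zero_mul] at hsub
      have : 0 < (k+1) * q := Nat.mul_pos (Nat.succ_pos k) (by omega)
      omega
    · exact h0
  have := Nat.le_of_dvd hpos hdvd2
  omega


open Classical in
private lemma auxA (e q : ℕ) (he : 2 ≤ e) (hq : e < q) (hcop : Nat.Coprime e q) :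
    (1 - X ^ q) * PowerSeries.mk
        (fun n => if ∃ m k : ℕ, n = m * e + k * q then (1 : ℤ) else 0)
      = ∑ i ∈ Finset.range q, (X : PowerSeries ℤ) ^ (e * i) := by
  have he0 : 0 < e := by omega
  have hq0 : 0 < q := by omega
  ext n
  rw [sub_mul, one_mul, map_sub, coeff_X_pow_mul', coeff_mk, map_sum]
  have hsum : ∀ i ∈ Finset.range q,
      (coeff n) ((X : PowerSeries ℤ) ^ (e * i)) = if n = e * i then 1 else 0 := by
    intro i _
    rw [coeff_X_pow]
  rw [Finset.sum_congr rfl hsum]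
  by_cases ha : ∃ i, i < q ∧ n = e * i
  · obtain ⟨i, hiq, rfl⟩ := ha
    have hsum1 : (∑ j ∈ Finset.range q, if e * i = e * j then (1:ℤ) else 0) = 1 := by
      rw [Finset.sum_eq_single i]
      · rw [if_pos rfl]
      · intro j _ hj
        rw [if_neg]
        intro hc
        exact hj (Nat.eq_of_mul_eq_mul_left he0 hc.symm)
      · intro h; exact absurd (Finset.mem_range.mpr hiq) h
    rw [hsum1]
    have hP : (if ∃ m k : ℕ, e * i = m * e + k * q then (1:ℤ) else 0) = 1 :=
      if_pos ⟨i, 0, by ring⟩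
    rw [hP]
    rcases le_or_gt q (e * i) with h1 | h1
    · rw [if_pos h1, coeff_mk, if_neg, sub_zero]
      rintro ⟨m, k, hmk⟩
      have hk : (k + 1) * q = k * q + q := by ring
      have hq' : e * i = m * e + (k + 1) * q := by omega
      exact auxNoRep e q he hcop i m k hiq hq'
    · rw [if_neg (not_le.mpr h1), sub_zero]
  · have hsum0 : (∑ j ∈ Finset.range q, if n = e * j then (1:ℤ) else 0) = 0 := by
      apply Finset.sum_eq_zero
      intro j hj
      rw [if_neg]
      intro hc
      exact ha ⟨j, Finset.mem_range.mp hj, hc⟩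
    rw [hsum0]
    by_cases hqn : q ≤ n
    · rw [if_pos hqn, coeff_mk]
      have hiff : (∃ m k : ℕ, n = m * e + k * q) ↔ (∃ m k : ℕ, n - q = m * e + k * q) := by
        constructor
        · rintro h
          obtain ⟨m, k, hmq, hmk⟩ := auxRep e q hq0 n h
          rcases Nat.eq_zero_or_pos k with h0 | h0
          · exfalso
            subst h0
            exact ha ⟨m, hmq, by rw [hmk]; ring⟩
          · refine ⟨m, k - 1, ?_⟩
            have hk : (k - 1) * q = k * q - q := Nat.sub_one_mul k q
            have hkq : q ≤ k * q := Nat.le_mul_of_pos_left q h0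
            omega
        · rintro ⟨m, k, hmk⟩
          refine ⟨m, k + 1, ?_⟩
          have hk : (k + 1) * q = k * q + q := by ring
          omega
      by_cases hp : ∃ m k : ℕ, n = m * e + k * q
      · rw [if_pos hp, if_pos (hiff.mp hp)]; ring
      · rw [if_neg hp, if_neg (fun h => hp (hiff.mpr h))]; ring
    · rw [if_neg hqn, sub_zero]
      rw [if_neg]
      rintro ⟨m, k, hmk⟩
      rcases Nat.eq_zero_or_pos k with h0 | h0
      · subst h0
        refine ha ⟨m, ?_, by rw [hmk]; ring⟩
        have h2 : m ≤ m * e := Nat.le_mul_of_pos_right m he0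
        omega
      · have : q ≤ k * q := Nat.le_mul_of_pos_left q h0
        omega

open PowerSeries Classical in
/-- The generating function `W(T)` of the Weierstrass gaps for `(e, q)` satisfies
`(1 - T)(1 - Tᵉ)(1 - T^q) W(T) = (1 - Tᵉ)(1 - T^q) - (1 - T)(1 - T^{eq})`,
i.e. `W(T) = 1/(1-T) - (1 - T^{eq})/((1 - Tᵉ)(1 - T^q))`. -/
theorem stmt9 (e q : ℕ) (he : 2 ≤ e) (hq : e < q) (hcop : Nat.Coprime e q)
    (W : PowerSeries ℤ)
    (hW : ∀ n : ℕ, PowerSeries.coeff n W =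
      if ∃ m k : ℕ, n = m * e + k * q then 0 else 1) :
    (1 - PowerSeries.X) * (1 - PowerSeries.X ^ e) * (1 - PowerSeries.X ^ q) * W
      = (1 - PowerSeries.X ^ e) * (1 - PowerSeries.X ^ q)
        - (1 - PowerSeries.X) * (1 - PowerSeries.X ^ (e * q)) := by
  have hWV : W + PowerSeries.mk (fun n => if ∃ m k : ℕ, n = m * e + k * q then (1:ℤ) else 0)
      = PowerSeries.mk (fun _ => (1:ℤ)) := by
    ext n
    rw [map_add, hW n, coeff_mk, coeff_mk]
    by_cases h : ∃ m k : ℕ, n = m * e + k * q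
    · rw [if_pos h, if_pos h]; ring
    · rw [if_neg h, if_neg h]; ring
  have hU : (1 - X) * (W + PowerSeries.mk
      (fun n => if ∃ m k : ℕ, n = m * e + k * q then (1:ℤ) else 0)) = 1 := by
    rw [hWV, auxU]
  have hA := auxA e q he hq hcop
  have hGeo : (1 - X ^ e) * ∑ i ∈ Finset.range q, (X : PowerSeries ℤ) ^ (e * i)
      = 1 - X ^ (e * q) := by
    have hg := geom_sum_mul ((X : PowerSeries ℤ) ^ e) q
    have h2 : ∑ i ∈ Finset.range q, ((X : PowerSeries ℤ) ^ e) ^ i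
        = ∑ i ∈ Finset.range q, (X : PowerSeries ℤ) ^ (e * i) := by
      refine Finset.sum_congr rfl fun i _ => ?_
      rw [← pow_mul]
    rw [h2, ← pow_mul] at hg
    linear_combination -hg
  calc (1 - X) * (1 - X ^ e) * (1 - X ^ q) * W
      = (1 - X ^ e) * (1 - X ^ q) * ((1 - X) * (W + PowerSeries.mk
          (fun n => if ∃ m k : ℕ, n = m * e + k * q then (1:ℤ) else 0)))
        - (1 - X) * ((1 - X ^ e) * ((1 - X ^ q) * PowerSeries.mk
          (fun n => if ∃ m k : ℕ, n = m * e + k * q then (1:ℤ) else 0))) := by ring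
    _ = (1 - X ^ e) * (1 - X ^ q) - (1 - X) * (1 - X ^ (e * q)) := by
        rw [hU, hA, hGeo, mul_one]
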